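/- Let (E, Λ, p) and (F, Λ, q) be locally Hilbert space models over the same directed index set Λ and let V ∈ 𝓛(E, F). Then V is bijective if and only if for every λ ∈ Λ the restriction V_λ : p λ → q λ is bijective. Moreover, if V is bijective, then the inverse map V⁻¹ : F → E belongs to 𝓛(F, E), and for each λ the restriction of V⁻¹ to q λ is the inverse of V_λ. -/

import Mathlib

open scoped InnerProductSpace

/-- The orthogonal projection of an inner product space onto a complete submodule,
viewed as a continuous linear map of the ambient space into itself. -/
noncomputable def projL {E : Type*} [NormedAddCommGroup E] [InnerProductSpace ℂ E]
    (K : Submodule ℂ E) [CompleteSpace K] : E →L[ℂ] E :=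
  K.subtypeL.comp (K.orthogonalProjectionOnto)

/-- An element of `𝓛(E, F)` for two locally Hilbert space models `(E, Λ, p)` and `(F, Λ, q)`
over the same index set: a linear map `E → F` mapping each `p l` into `q l`, whose
restrictions `p l → q l` are continuous (bounded) operators, and which intertwines the
orthogonal projections `projL (p l)` and `projL (q l)`. -/
structure LocOpPair {E F : Type*} [NormedAddCommGroup E] [InnerProductSpace ℂ E]
    [NormedAddCommGroup F] [InnerProductSpace ℂ F]
    {Λ : Type*} (p : Λ → Submodule ℂ E) (q : Λ → Submodule ℂ F)
    [∀ l, CompleteSpace (p l)] [∀ l, CompleteSpace (q l)] where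
  toFun : E →ₗ[ℂ] F
  restr : ∀ l, p l →L[ℂ] q l
  restr_eq : ∀ l (x : p l), (restr l x : F) = toFun x
  proj_comm : ∀ l (x : E), toFun (projL (p l) x) = projL (q l) (toFun x)

lemma projL_mem {E : Type*} [NormedAddCommGroup E] [InnerProductSpace ℂ E]
    (K : Submodule ℂ E) [CompleteSpace K] (x : E) : projL K x ∈ K :=
  (K.orthogonalProjectionOnto x).2

lemma projL_eq_self {E : Type*} [NormedAddCommGroup E] [InnerProductSpace ℂ E]
    (K : Submodule ℂ E) [CompleteSpace K] {x : E} (hx : x ∈ K) : projL K x = x := by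
  have := Submodule.orthogonalProjectionOnto_mem_subspace_eq_self (K := K) ⟨x, hx⟩
  simp [projL, this]

/-- **Theorem 2.2 (iii).**  `V ∈ 𝓛(E, F)` is bijective iff each restriction
`V_λ : p λ → q λ` is bijective; in that case the inverse map belongs to `𝓛(F, E)` and its
restrictions are the inverses of the `V_λ`. -/
theorem locOpPair_bijective_iff
    {E F : Type*} [NormedAddCommGroup E] [InnerProductSpace ℂ E]
    [NormedAddCommGroup F] [InnerProductSpace ℂ F]
    {Λ : Type*} [PartialOrder Λ] [IsDirected Λ (· ≤ ·)]
    (p : Λ → Submodule ℂ E) (q : Λ → Submodule ℂ F)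
    [∀ l, CompleteSpace (p l)] [∀ l, CompleteSpace (q l)]
    (hmonop : Monotone p) (hexhp : ∀ x : E, ∃ l, x ∈ p l)
    (hmonoq : Monotone q) (hexhq : ∀ y : F, ∃ l, y ∈ q l)
    (V : LocOpPair p q) :
    (Function.Bijective V.toFun ↔ ∀ l, Function.Bijective (V.restr l)) ∧
    (Function.Bijective V.toFun →
      ∃ W : LocOpPair q p,
        (∀ x : E, W.toFun (V.toFun x) = x) ∧
        (∀ y : F, V.toFun (W.toFun y) = y) ∧
        (∀ l, (∀ x : p l, W.restr l (V.restr l x) = x) ∧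
              (∀ y : q l, V.restr l (W.restr l y) = y))) := by
  have hiff : Function.Bijective V.toFun ↔ ∀ l, Function.Bijective (V.restr l) := by
    constructor
    · intro hV l
      constructor
      · intro a b hab
        have h1 : V.toFun (a : E) = V.toFun (b : E) := by
          rw [← V.restr_eq l a, ← V.restr_eq l b, hab]
        exact Subtype.ext (hV.injective h1)
      · intro y
        obtain ⟨x, hx⟩ := hV.surjective (y : F)
        refine ⟨⟨projL (p l) x, projL_mem _ _⟩, ?_⟩
        apply Subtype.ext
        rw [V.restr_eq l, V.proj_comm l x, hx, projL_eq_self _ y.2]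
    · intro h
      constructor
      · intro a b hab
        obtain ⟨la, hla⟩ := hexhp a
        obtain ⟨lb, hlb⟩ := hexhp b
        obtain ⟨l, h1, h2⟩ := directed_of (· ≤ ·) la lb
        have ha : a ∈ p l := hmonop h1 hla
        have hb : b ∈ p l := hmonop h2 hlb
        have : V.restr l ⟨a, ha⟩ = V.restr l ⟨b, hb⟩ := by
          apply Subtype.ext
          rw [V.restr_eq, V.restr_eq]
          exact hab
        have := (h l).injective this
        exact congrArg Subtype.val this
      · intro y
        obtain ⟨l, hl⟩ := hexhq y
        obtain ⟨x, hx⟩ := (h l).surjective ⟨y, hl⟩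
        exact ⟨x, by rw [← V.restr_eq l x, hx]⟩
  refine ⟨hiff, ?_⟩
  intro hV
  have hb := hiff.mp hV
  let e : E ≃ₗ[ℂ] F := LinearEquiv.ofBijective V.toFun hV
  have he : ∀ x : E, e.symm (V.toFun x) = x := fun x => e.symm_apply_apply x
  have he' : ∀ y : F, V.toFun (e.symm y) = y := fun y => e.apply_symm_apply y
  let f : ∀ l, (p l) ≃L[ℂ] (q l) := fun l =>
    ContinuousLinearEquiv.ofBijective (V.restr l)
      (LinearMap.ker_eq_bot |>.mpr (hb l).injective)
      (LinearMap.range_eq_top.mpr (hb l).surjective)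
  have hrestr : ∀ l (y : q l), (((f l).symm y : p l) : E) = e.symm (y : F) := by
    intro l y
    apply hV.injective
    rw [he']
    rw [← V.restr_eq l]
    have : V.restr l ((f l).symm y) = (f l) ((f l).symm y) := rfl
    rw [this, (f l).apply_symm_apply]
  refine ⟨⟨e.symm.toLinearMap, fun l => ((f l).symm : q l →L[ℂ] p l), ?_, ?_⟩, ?_, ?_, ?_⟩
  · intro l y
    exact hrestr l y
  · intro l y
    apply hV.injective
    show V.toFun (e.symm (projL (q l) y)) = V.toFun (projL (p l) (e.symm y))
    rw [he', V.proj_comm l, he']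
  · exact he
  · exact he'
  · intro l
    constructor
    · intro x
      exact (f l).symm_apply_apply x
    · intro y
      exact (f l).apply_symm_apply y
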